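/- Let W be a DMC with finite input alphabet X and finite output alphabet Y, with capacity C = max_P I(P,W), let P* be a capacity-achieving input distribution, and let Q* = P*W be the capacity-achieving output distribution. Then for any input distribution P' with induced output distribution Q' = P'W, one has I(P', W) ≤ C − D(Q' ‖ Q*); moreover, equality holds if supp(P') ⊆ supp(P*). -/

import Mathlib

/-!
STATEMENT 4: Let `C` be the capacity of a DMC `W`, `P*` a capacity-achieving input
distribution and `Q* = P*W` the capacity-achieving output distribution. Then for any
input distribution `P'` with induced output distribution `Q' = P'W`,
`I(P', W) ≤ C − D(Q' ‖ Q*)`, with equality if `supp(P') ⊆ supp(P*)`.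
-/

open scoped BigOperators

/-- `p` is a probability mass function on a finite type. -/
def IsDist {α : Type*} [Fintype α] (p : α → ℝ) : Prop :=
  (∀ a, 0 ≤ p a) ∧ ∑ a, p a = 1

/-- Relative entropy (in nats) between pmfs on a finite type. -/
noncomputable def relEnt {α : Type*} [Fintype α] (p q : α → ℝ) : ℝ :=
  ∑ a, p a * Real.log (p a / q a)

/-- Output distribution on `Y` induced by input distribution `P` through channel `W`. -/
noncomputable def outDist {X Y : Type*} [Fintype X] (P : X → ℝ) (W : X → Y → ℝ) : Y → ℝ :=
  fun y => ∑ x, P x * W x y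

/-- Mutual information `I(P, W)`. -/
noncomputable def mutInfo {X Y : Type*} [Fintype X] [Fintype Y] (P : X → ℝ) (W : X → Y → ℝ) : ℝ :=
  ∑ x, ∑ y, P x * W x y * Real.log (W x y / outDist P W y)

lemma outDist_nonneg {X Y : Type*} [Fintype X] [Fintype Y] (P : X → ℝ) (W : X → Y → ℝ)
    (hP : ∀ x, 0 ≤ P x) (hW : ∀ x, IsDist (W x)) (y : Y) : 0 ≤ outDist P W y :=
  Finset.sum_nonneg fun x _ => mul_nonneg (hP x) ((hW x).1 y)

lemma le_outDist {X Y : Type*} [Fintype X] [Fintype Y] (P : X → ℝ) (W : X → Y → ℝ)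
    (hP : ∀ x, 0 ≤ P x) (hW : ∀ x, IsDist (W x)) (x : X) (y : Y) :
    P x * W x y ≤ outDist P W y :=
  Finset.single_le_sum (fun x _ => mul_nonneg (hP x) ((hW x).1 y)) (Finset.mem_univ x)

lemma sum_outDist {X Y : Type*} [Fintype X] [Fintype Y] (P : X → ℝ) (W : X → Y → ℝ)
    (hP : IsDist P) (hW : ∀ x, IsDist (W x)) : ∑ y, outDist P W y = 1 := by
  unfold outDist
  rw [Finset.sum_comm]
  have : ∀ x : X, ∑ y, P x * W x y = P x := by
    intro x; rw [← Finset.mul_sum, (hW x).2, mul_one]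
  simp_rw [this]; exact hP.2

lemma relEnt_self {α : Type*} [Fintype α] (q : α → ℝ) : relEnt q q = 0 := by
  unfold relEnt
  apply Finset.sum_eq_zero
  intro a _
  rcases eq_or_ne (q a) 0 with h | h
  · simp [h]
  · rw [div_self h, Real.log_one, mul_zero]

lemma chain {X Y : Type*} [Fintype X] [Fintype Y]
    (W : X → Y → ℝ) (hW : ∀ x, IsDist (W x))
    (P : X → ℝ) (hP : ∀ x, 0 ≤ P x)
    (Q : Y → ℝ)
    (habs : ∀ x y, P x ≠ 0 → W x y ≠ 0 → Q y ≠ 0) :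
    ∑ x, P x * relEnt (W x) Q = mutInfo P W + relEnt (outDist P W) Q := by
  unfold relEnt mutInfo
  have hre : (∑ y, outDist P W y * Real.log (outDist P W y / Q y))
      = ∑ x, ∑ y, P x * W x y * Real.log (outDist P W y / Q y) := by
    rw [Finset.sum_comm]
    apply Finset.sum_congr rfl
    intro y _
    rw [outDist, Finset.sum_mul]
  rw [hre, ← Finset.sum_add_distrib]
  apply Finset.sum_congr rfl
  intro x _
  rw [Finset.mul_sum, ← Finset.sum_add_distrib]
  apply Finset.sum_congr rfl
  intro y _
  rcases eq_or_ne (P x) 0 with hx | hx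
  · simp [hx]
  rcases eq_or_ne (W x y) 0 with hw | hw
  · simp [hw]
  have hPx : 0 < P x := (hP x).lt_of_ne' hx
  have hWx : 0 < W x y := ((hW x).1 y).lt_of_ne' hw
  have hQ' : 0 < outDist P W y := lt_of_lt_of_le (mul_pos hPx hWx) (le_outDist P W hP hW x y)
  have hQ : Q y ≠ 0 := habs x y hx hw
  rw [Real.log_div hw hQ, Real.log_div hw (ne_of_gt hQ'), Real.log_div (ne_of_gt hQ') hQ]
  ring

lemma relEnt_nonneg {α : Type*} [Fintype α] (p q : α → ℝ)
    (hp : IsDist p) (hq : ∀ a, 0 ≤ q a) (hqs : ∑ a, q a ≤ 1)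
    (habs : ∀ a, p a ≠ 0 → q a ≠ 0) : 0 ≤ relEnt p q := by
  have key : ∀ a, p a - q a ≤ p a * Real.log (p a / q a) := by
    intro a
    rcases eq_or_ne (p a) 0 with h | h
    · simp [h, hq a]
    have hpa : 0 < p a := (hp.1 a).lt_of_ne' h
    have hqa : 0 < q a := (hq a).lt_of_ne' (habs a h)
    have hlog : Real.log (q a / p a) ≤ q a / p a - 1 :=
      Real.log_le_sub_one_of_pos (div_pos hqa hpa)
    rw [Real.log_div (ne_of_gt hpa) (ne_of_gt hqa)]
    rw [Real.log_div (ne_of_gt hqa) (ne_of_gt hpa)] at hlog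
    have h2 := mul_le_mul_of_nonneg_left hlog (le_of_lt hpa)
    have hcancel : p a * (q a / p a) = q a := by field_simp
    nlinarith
  calc (0:ℝ) = 1 - 1 := by ring
    _ ≤ ∑ a, p a - ∑ a, q a := by rw [hp.2]; linarith
    _ = ∑ a, (p a - q a) := (Finset.sum_sub_distrib _ _).symm
    _ ≤ ∑ a, p a * Real.log (p a / q a) := Finset.sum_le_sum fun a _ => key a

lemma per_y (qs q' t : ℝ) (hqs : 0 ≤ qs) (hq' : 0 ≤ q') (ht0 : 0 < t) (ht1 : t < 1) :
    q' * Real.log (q' / qs) - t * (q' ^ 2 / qs) + (if qs = 0 then q' else 0) * (-Real.log t)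
      ≤ q' * Real.log (q' / ((1 - t) * qs + t * q')) := by
  rcases eq_or_ne q' 0 with h | h
  · simp [h]
  have hq'p : 0 < q' := hq'.lt_of_ne' h
  rcases eq_or_ne qs 0 with hs | hs
  · subst hs
    have he : q' / ((1 - t) * 0 + t * q') = 1 / t := by
      rw [mul_zero, zero_add, div_eq_div_iff (by positivity) (ne_of_gt ht0)]
      ring
    rw [if_pos rfl, div_zero, Real.log_zero, mul_zero, div_zero, mul_zero, he, one_div,
      Real.log_inv]
    linarith
  · rw [if_neg hs]
    have hqsp : 0 < qs := hqs.lt_of_ne' hs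
    have hqt : 0 < (1 - t) * qs + t * q' := by
      have h1t : 0 < 1 - t := by linarith
      positivity
    have h1 : Real.log ((1 - t) * qs + t * q') ≤ Real.log (qs + t * q') :=
      Real.log_le_log hqt (by nlinarith)
    have heq : qs + t * q' = qs * (1 + t * q' / qs) := by field_simp
    have h2 : Real.log (qs + t * q') = Real.log qs + Real.log (1 + t * q' / qs) := by
      rw [heq, Real.log_mul (ne_of_gt hqsp) (by positivity)]
    have h3 : Real.log (1 + t * q' / qs) ≤ t * q' / qs := by
      have := Real.log_le_sub_one_of_pos (show (0:ℝ) < 1 + t * q' / qs by positivity)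
      linarith
    have hcomb : Real.log ((1 - t) * qs + t * q') ≤ Real.log qs + t * q' / qs := by
      rw [h2] at h1; linarith
    have hmul := mul_le_mul_of_nonneg_left hcomb hq'p.le
    have hsq : q' * (t * q' / qs) = t * (q' ^ 2 / qs) := by ring
    rw [Real.log_div (ne_of_gt hq'p) (ne_of_gt hqt),
        Real.log_div (ne_of_gt hq'p) (ne_of_gt hqsp), zero_mul]
    nlinarith

lemma main_ineq {X Y : Type*} [Fintype X] [Fintype Y]
    (W : X → Y → ℝ) (hW : ∀ x, IsDist (W x))
    (Pstar : X → ℝ) (hPstar : IsDist Pstar)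
    (C : ℝ) (hC : C = mutInfo Pstar W)
    (hcap : ∀ P : X → ℝ, IsDist P → mutInfo P W ≤ C)
    (P' : X → ℝ) (hP' : IsDist P') :
    mutInfo P' W + relEnt (outDist P' W) (outDist Pstar W) ≤ C := by
  set Qs := outDist Pstar W with hQs
  set Q' := outDist P' W with hQ'def
  set I' := mutInfo P' W with hI'
  set D := relEnt Q' Qs with hD
  set K := ∑ y, Q' y ^ 2 / Qs y with hK
  set M := ∑ y ∈ Finset.univ.filter (fun y => Qs y = 0), Q' y with hM
  have hQsnn : ∀ y, 0 ≤ Qs y := outDist_nonneg Pstar W hPstar.1 hW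
  have hQ'nn : ∀ y, 0 ≤ Q' y := outDist_nonneg P' W hP'.1 hW
  have hQssum : ∑ y, Qs y = 1 := sum_outDist Pstar W hPstar hW
  have hQ'sum : ∑ y, Q' y = 1 := sum_outDist P' W hP' hW
  have hKnn : 0 ≤ K := Finset.sum_nonneg fun y _ => div_nonneg (sq_nonneg _) (hQsnn y)
  have hMnn : 0 ≤ M := Finset.sum_nonneg fun y _ => hQ'nn y
  have key : ∀ t : ℝ, 0 < t → t < 1 → I' + D - t * K - M * Real.log t ≤ C := by
    intro t ht0 ht1
    set Pt : X → ℝ := fun x => (1 - t) * Pstar x + t * P' x with hPtdef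
    have hPtDist : IsDist Pt := by
      constructor
      · intro x
        exact add_nonneg (mul_nonneg (by linarith) (hPstar.1 x)) (mul_nonneg ht0.le (hP'.1 x))
      · simp only [hPtdef]
        rw [Finset.sum_add_distrib, ← Finset.mul_sum, ← Finset.mul_sum, hPstar.2, hP'.2]
        ring
    set Qt : Y → ℝ := fun y => (1 - t) * Qs y + t * Q' y with hQtdef
    have hQtout : outDist Pt W = Qt := by
      funext y
      simp only [outDist, hPtdef, hQtdef, hQs, hQ'def, add_mul, Finset.sum_add_distrib,
        Finset.mul_sum, mul_assoc]
    have hQtnn : ∀ y, 0 ≤ Qt y := fun y =>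
      add_nonneg (mul_nonneg (by linarith) (hQsnn y)) (mul_nonneg ht0.le (hQ'nn y))
    have hQtsum : ∑ y, Qt y = 1 := by
      simp only [hQtdef]
      rw [Finset.sum_add_distrib, ← Finset.mul_sum, ← Finset.mul_sum, hQssum, hQ'sum]
      ring
    have habs_s : ∀ y, Qs y ≠ 0 → Qt y ≠ 0 := by
      intro y hy
      have : 0 < Qs y := (hQsnn y).lt_of_ne' hy
      have : 0 < Qt y := by
        have := mul_nonneg ht0.le (hQ'nn y)
        simp only [hQtdef]
        nlinarith
      exact ne_of_gt this
    have habs_q : ∀ y, Q' y ≠ 0 → Qt y ≠ 0 := by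
      intro y hy
      have : 0 < Q' y := (hQ'nn y).lt_of_ne' hy
      have : 0 < Qt y := by
        have := mul_nonneg (show (0:ℝ) ≤ 1 - t by linarith) (hQsnn y)
        simp only [hQtdef]
        nlinarith
      exact ne_of_gt this
    have c2 : ∑ x, Pstar x * relEnt (W x) Qt = C + relEnt Qs Qt := by
      rw [chain W hW Pstar hPstar.1 Qt ?_, ← hC, ← hQs]
      intro x y hx hw
      apply habs_s
      have : 0 < Pstar x * W x y :=
        mul_pos ((hPstar.1 x).lt_of_ne' hx) (((hW x).1 y).lt_of_ne' hw)
      exact ne_of_gt (lt_of_lt_of_le this (le_outDist Pstar W hPstar.1 hW x y))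
    have c3 : ∑ x, P' x * relEnt (W x) Qt = I' + relEnt Q' Qt := by
      rw [chain W hW P' hP'.1 Qt ?_, ← hI', ← hQ'def]
      intro x y hx hw
      apply habs_q
      have : 0 < P' x * W x y :=
        mul_pos ((hP'.1 x).lt_of_ne' hx) (((hW x).1 y).lt_of_ne' hw)
      exact ne_of_gt (lt_of_lt_of_le this (le_outDist P' W hP'.1 hW x y))
    have c1 : ∑ x, Pt x * relEnt (W x) Qt = mutInfo Pt W := by
      rw [chain W hW Pt hPtDist.1 Qt ?_, hQtout, relEnt_self, add_zero]
      intro x y hx hw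
      have : 0 < Pt x * W x y :=
        mul_pos ((hPtDist.1 x).lt_of_ne' hx) (((hW x).1 y).lt_of_ne' hw)
      have h2 := lt_of_lt_of_le this (le_outDist Pt W hPtDist.1 hW x y)
      rw [hQtout] at h2
      exact ne_of_gt h2
    have csplit : ∑ x, Pt x * relEnt (W x) Qt
        = (1 - t) * ∑ x, Pstar x * relEnt (W x) Qt + t * ∑ x, P' x * relEnt (W x) Qt := by
      simp only [hPtdef, add_mul, Finset.sum_add_distrib, Finset.mul_sum, mul_assoc]
    have hA : 0 ≤ relEnt Qs Qt :=
      relEnt_nonneg Qs Qt ⟨hQsnn, hQssum⟩ hQtnn (le_of_eq hQtsum) habs_s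
    have hcapPt := hcap Pt hPtDist
    have step1 : I' + relEnt Q' Qt ≤ C := by
      rw [csplit, c2, c3] at c1
      nlinarith [c1, hcapPt, hA, ht0]
    have step2 : D - t * K - M * Real.log t ≤ relEnt Q' Qt := by
      have hper : ∀ y : Y, Q' y * Real.log (Q' y / Qs y) - t * (Q' y ^ 2 / Qs y)
          + (if Qs y = 0 then Q' y else 0) * (-Real.log t)
          ≤ Q' y * Real.log (Q' y / Qt y) := fun y =>
        per_y (Qs y) (Q' y) t (hQsnn y) (hQ'nn y) ht0 ht1
      have hsum : ∑ y, (Q' y * Real.log (Q' y / Qs y) - t * (Q' y ^ 2 / Qs y)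
          + (if Qs y = 0 then Q' y else 0) * (-Real.log t))
          ≤ ∑ y, Q' y * Real.log (Q' y / Qt y) :=
        Finset.sum_le_sum fun y _ => hper y
      have hLHS : D - t * K - M * Real.log t
          = ∑ y, (Q' y * Real.log (Q' y / Qs y) - t * (Q' y ^ 2 / Qs y)
            + (if Qs y = 0 then Q' y else 0) * (-Real.log t)) := by
        rw [hD, relEnt, hK, hM, Finset.sum_filter, Finset.sum_add_distrib,
          Finset.sum_sub_distrib, ← Finset.mul_sum, ← Finset.sum_mul]
        ring
      rw [hLHS]
      exact hsum
    linarith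
  -- Step: M = 0
  have hMzero : M = 0 := by
    by_contra hne
    have hMp : 0 < M := hMnn.lt_of_ne' hne
    set t0 := min (1 / 2 : ℝ) (Real.exp (-((C + K - (I' + D)) / M + 1))) with ht0def
    have ht00 : 0 < t0 := lt_min (by norm_num) (Real.exp_pos _)
    have ht01 : t0 < 1 := lt_of_le_of_lt (min_le_left _ _) (by norm_num)
    have hlog : Real.log t0 ≤ -((C + K - (I' + D)) / M + 1) := by
      calc Real.log t0 ≤ Real.log (Real.exp (-((C + K - (I' + D)) / M + 1))) :=
            Real.log_le_log ht00 (min_le_right _ _)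
        _ = -((C + K - (I' + D)) / M + 1) := Real.log_exp _
    have hkey := key t0 ht00 ht01
    have hdiv : M * ((C + K - (I' + D)) / M) = C + K - (I' + D) :=
      mul_div_cancel₀ _ (ne_of_gt hMp)
    have htK : t0 * K ≤ 1 * K := mul_le_mul_of_nonneg_right ht01.le hKnn
    nlinarith [mul_le_mul_of_nonneg_left hlog hMp.le]
  -- Conclusion
  show I' + D ≤ C
  apply le_of_forall_pos_le_add
  intro ε hε
  set t1 := min (1 / 2 : ℝ) (ε / (K + 1)) with ht1def
  have ht10 : 0 < t1 := lt_min (by norm_num) (div_pos hε (by linarith))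
  have ht11 : t1 < 1 := lt_of_le_of_lt (min_le_left _ _) (by norm_num)
  have hkey := key t1 ht10 ht11
  rw [hMzero, zero_mul] at hkey
  have h5 : (ε / (K + 1)) * K = ε - ε / (K + 1) := by field_simp; ring
  have h6 : t1 * K ≤ (ε / (K + 1)) * K :=
    mul_le_mul_of_nonneg_right (min_le_right _ _) hKnn
  have h7 : 0 < ε / (K + 1) := div_pos hε (by linarith)
  linarith


theorem statement4 {X Y : Type*} [Fintype X] [Fintype Y]
    (W : X → Y → ℝ) (hW : ∀ x, IsDist (W x))
    (Pstar : X → ℝ) (hPstar : IsDist Pstar)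
    (C : ℝ) (hC : C = mutInfo Pstar W)
    (hcap : ∀ P : X → ℝ, IsDist P → mutInfo P W ≤ C)
    (P' : X → ℝ) (hP' : IsDist P') :
    mutInfo P' W ≤ C - relEnt (outDist P' W) (outDist Pstar W) ∧
      ((∀ x, P' x ≠ 0 → Pstar x ≠ 0) →
        mutInfo P' W = C - relEnt (outDist P' W) (outDist Pstar W)) := by
  classical
  have hmain := main_ineq W hW Pstar hPstar C hC hcap P' hP'
  refine ⟨by linarith, ?_⟩
  intro hsupp
  set Qs := outDist Pstar W with hQs
  -- Kuhn-Tucker inequality: D(W x ‖ Q*) ≤ C for every x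
  have hKKT : ∀ x0, relEnt (W x0) Qs ≤ C := by
    intro x0
    set dlt : X → ℝ := fun x => if x = x0 then (1 : ℝ) else 0 with hdlt
    have hdltDist : IsDist dlt := by
      constructor
      · intro x; simp only [hdlt]; split <;> norm_num
      · simp [hdlt]
    have hout : outDist dlt W = W x0 := by
      funext y
      simp [outDist, hdlt, ite_mul]
    have hmut : mutInfo dlt W = 0 := by
      unfold mutInfo
      rw [hout]
      apply Finset.sum_eq_zero
      intro x _
      apply Finset.sum_eq_zero
      intro y _
      rcases eq_or_ne x x0 with h | h
      · subst h
        rcases eq_or_ne (W x y) 0 with hw | hw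
        · simp [hw]
        · rw [div_self hw, Real.log_one, mul_zero]
      · simp [hdlt, h]
    have := main_ineq W hW Pstar hPstar C hC hcap dlt hdltDist
    rw [hmut, hout] at this
    linarith
  -- chain identity for Pstar: ∑ Pstar x * D(W x ‖ Qs) = C
  have habs_s : ∀ x y, Pstar x ≠ 0 → W x y ≠ 0 → Qs y ≠ 0 := by
    intro x y hx hw
    have : 0 < Pstar x * W x y :=
      mul_pos ((hPstar.1 x).lt_of_ne' hx) (((hW x).1 y).lt_of_ne' hw)
    exact ne_of_gt (lt_of_lt_of_le this (le_outDist Pstar W hPstar.1 hW x y))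
  have cstar : ∑ x, Pstar x * relEnt (W x) Qs = C := by
    rw [chain W hW Pstar hPstar.1 Qs habs_s, ← hQs, relEnt_self, add_zero, hC]
  -- equality on the support of Pstar
  have hKKTeq : ∀ x, Pstar x ≠ 0 → relEnt (W x) Qs = C := by
    intro x hx
    have hz : ∑ x, Pstar x * (C - relEnt (W x) Qs) = 0 := by
      simp only [mul_sub]
      rw [Finset.sum_sub_distrib, cstar, ← Finset.sum_mul, hPstar.2, one_mul, sub_self]
    have hnn : ∀ i ∈ Finset.univ, (0:ℝ) ≤ Pstar i * (C - relEnt (W i) Qs) :=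
      fun i _ => mul_nonneg (hPstar.1 i) (by linarith [hKKT i])
    have := (Finset.sum_eq_zero_iff_of_nonneg hnn).1 hz x (Finset.mem_univ x)
    rcases mul_eq_zero.1 this with h | h
    · exact absurd h hx
    · linarith
  -- chain identity for P'
  have habs' : ∀ x y, P' x ≠ 0 → W x y ≠ 0 → Qs y ≠ 0 :=
    fun x y hx hw => habs_s x y (hsupp x hx) hw
  have c' : ∑ x, P' x * relEnt (W x) Qs
      = mutInfo P' W + relEnt (outDist P' W) Qs :=
    chain W hW P' hP'.1 Qs habs'
  have hsum' : ∑ x, P' x * relEnt (W x) Qs = C := by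
    have : ∀ x, P' x * relEnt (W x) Qs = P' x * C := by
      intro x
      rcases eq_or_ne (P' x) 0 with h | h
      · rw [h, zero_mul, zero_mul]
      · rw [hKKTeq x (hsupp x h)]
    rw [Finset.sum_congr rfl fun x _ => this x, ← Finset.sum_mul, hP'.2, one_mul]
  linarith [c', hsum']
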